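/- Let x ∈ E, let H : E →L[ℝ] E be a continuous linear operator, let α ∈ [0, 1], and let z ∈ E satisfy H z = −α ∇f(x). Then ‖∇f(x + z)‖ ≤ (1 − α)·‖∇f(x)‖ + ‖∇²f(x) − H‖·‖z‖ + (L/2)·‖z‖². -/

import Mathlib

theorem inexact_newton_one_step (p : ℕ) (hp : 1 ≤ p)
    (f : EuclideanSpace ℝ (Fin p) → ℝ) (hf : ContDiff ℝ 2 f)
    (L : ℝ) (hL : 0 < L)
    (hlip : ∀ x y : EuclideanSpace ℝ (Fin p),
      ‖fderiv ℝ (gradient f) x - fderiv ℝ (gradient f) y‖ ≤ L * ‖x - y‖)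
    (x z : EuclideanSpace ℝ (Fin p))
    (H : EuclideanSpace ℝ (Fin p) →L[ℝ] EuclideanSpace ℝ (Fin p))
    (α : ℝ) (hα0 : 0 ≤ α) (hα1 : α ≤ 1)
    (hz : H z = -α • gradient f x) :
    ‖gradient f (x + z)‖ ≤
      (1 - α) * ‖gradient f x‖ + ‖fderiv ℝ (gradient f) x - H‖ * ‖z‖
        + L / 2 * ‖z‖ ^ 2 := by
  set g : EuclideanSpace ℝ (Fin p) → EuclideanSpace ℝ (Fin p) := gradient f with hg_def
  -- g is C¹
  have hg : ContDiff ℝ 1 g := by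
    have h1 : ContDiff ℝ 1 (fderiv ℝ f) := hf.fderiv_right (by norm_num)
    have h2 : g = fun y => (InnerProductSpace.toDual ℝ (EuclideanSpace ℝ (Fin p))).symm
        (fderiv ℝ f y) := rfl
    rw [h2]
    exact (InnerProductSpace.toDual ℝ (EuclideanSpace ℝ (Fin p))).symm.contDiff.comp h1
  have hgd : Differentiable ℝ g := hg.differentiable one_ne_zero
  set A : EuclideanSpace ℝ (Fin p) →L[ℝ] EuclideanSpace ℝ (Fin p) := fderiv ℝ g x with hA
  set φ : ℝ → EuclideanSpace ℝ (Fin p) := fun t => g (x + t • z) - g x - t • (A z) with hφ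
  have hline : ∀ t : ℝ, HasDerivAt (fun s : ℝ => x + s • z) z t := by
    intro t
    simpa using ((hasDerivAt_id t).smul_const z).const_add x
  have hφ' : ∀ t : ℝ, HasDerivAt φ (fderiv ℝ g (x + t • z) z - A z) t := by
    intro t
    have h1 : HasDerivAt (fun s : ℝ => g (x + s • z)) (fderiv ℝ g (x + t • z) z) t :=
      by exact (hgd (x + t • z)).hasFDerivAt.comp_hasDerivAt t (hline t)
    have h2 : HasDerivAt (fun s : ℝ => s • (A z)) (A z) t := by
      simpa using (hasDerivAt_id t).smul_const (A z)
    exact (h1.sub_const (g x)).sub h2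
  have hbound : ∀ t ∈ Set.Ico (0:ℝ) 1, ‖fderiv ℝ g (x + t • z) z - A z‖ ≤ L * ‖z‖^2 * t := by
    intro t ht
    have hle : ‖fderiv ℝ g (x + t • z) z - A z‖
        ≤ ‖fderiv ℝ g (x + t • z) - A‖ * ‖z‖ :=
      (fderiv ℝ g (x + t • z) - A).le_opNorm z
    refine hle.trans ?_
    have h2 : ‖fderiv ℝ g (x + t • z) - A‖ ≤ L * ‖t • z‖ := by
      have := hlip (x + t • z) x
      rwa [add_sub_cancel_left] at this
    have h3 : ‖t • z‖ = t * ‖z‖ := by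
      rw [norm_smul, Real.norm_eq_abs, abs_of_nonneg ht.1]
    calc ‖fderiv ℝ g (x + t • z) - A‖ * ‖z‖ ≤ L * (t * ‖z‖) * ‖z‖ := by
          apply mul_le_mul_of_nonneg_right _ (norm_nonneg z)
          rw [← h3]; exact h2
      _ = L * ‖z‖^2 * t := by ring
  have hB : ∀ t ∈ Set.Icc (0:ℝ) 1, ‖φ t‖ ≤ L * ‖z‖^2 * t^2 / 2 :=
    image_norm_le_of_norm_deriv_right_le_deriv_boundary
      (f := φ) (f' := fun t => fderiv ℝ g (x + t • z) z - A z)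
      (a := 0) (b := 1)
      (fun t _ => (hφ' t).continuousAt.continuousWithinAt)
      (fun t _ => (hφ' t).hasDerivWithinAt)
      (B := fun t => L * ‖z‖^2 * t^2 / 2) (B' := fun t => L * ‖z‖^2 * t)
      (by have h0 : φ 0 = 0 := by simp [hφ]
          rw [h0]; simp)
      (fun t => by
        have h := ((hasDerivAt_pow 2 t).const_mul (L * ‖z‖^2)).div_const 2
        exact h.congr_deriv (by ring))
      (fun t ht => hbound t ht)
  have hrem : ‖g (x + z) - g x - A z‖ ≤ L / 2 * ‖z‖^2 := by
    have h1 := hB 1 (by norm_num)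
    have h2 : φ 1 = g (x + z) - g x - A z := by simp [hφ]
    rw [h2] at h1
    calc ‖g (x + z) - g x - A z‖ ≤ L * ‖z‖^2 * 1^2 / 2 := h1
      _ = L / 2 * ‖z‖^2 := by ring
  have hdecomp : g (x + z) = (g (x + z) - g x - A z) + ((A - H) z) + (1 - α) • g x := by
    have h1 : (A - H) z = A z - H z := by simp
    rw [h1, hz]
    simp only [sub_smul, one_smul, neg_smul]
    abel
  calc ‖g (x + z)‖
      = ‖(g (x + z) - g x - A z) + ((A - H) z) + (1 - α) • g x‖ := by rw [← hdecomp]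
    _ ≤ ‖g (x + z) - g x - A z‖ + ‖(A - H) z‖ + ‖(1 - α) • g x‖ :=
        norm_add₃_le
    _ ≤ L / 2 * ‖z‖^2 + ‖A - H‖ * ‖z‖ + (1 - α) * ‖g x‖ := by
        have h3 : ‖(1 - α) • g x‖ ≤ (1 - α) * ‖g x‖ := by
          rw [norm_smul, Real.norm_eq_abs, abs_of_nonneg (by linarith)]
        exact add_le_add (add_le_add hrem ((A - H).le_opNorm z)) h3
    _ = (1 - α) * ‖g x‖ + ‖A - H‖ * ‖z‖ + L / 2 * ‖z‖^2 := by ring
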